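/- Let a, b ∈ ℂ with b not a nonpositive integer, and s ∈ ℂ. For u_n(z) = ₁F₁(a+n; b; sz), the following four-term identity holds as formal power series for n ≥ 1: s·z²·u_n'(z) = (a+n)[(a+n+1)u_{n+2}(z) + (b − 3(a+n) − 2)u_{n+1}(z) + (3(a+n) − 2b + 1)u_n(z) + (b − (a+n))u_{n−1}(z)]. -/

import Mathlib

open PowerSeries

/-- Pochhammer symbol `(a)_k = a (a+1) ⋯ (a+k−1)` in `ℂ`. -/
noncomputable def poch (a : ℂ) (k : ℕ) : ℂ := (ascPochhammer ℂ k).eval a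

/-- Kummer confluent hypergeometric series `₁F₁(a;b;sz)` as a formal power series in `z`. -/
noncomputable def F1 (a b s : ℂ) : PowerSeries ℂ :=
  PowerSeries.mk fun k => poch a k / poch b k * s ^ k / (k.factorial : ℂ)

/-- Formal derivative of a power series. -/
noncomputable def D (f : PowerSeries ℂ) : PowerSeries ℂ := f.derivativeFun

lemma poch_zero (c : ℂ) : poch c 0 = 1 := by simp [poch]

lemma poch_succ (c : ℂ) (k : ℕ) : poch c (k+1) = poch c k * (c + k) := by
  simp [poch, ascPochhammer_succ_right, Polynomial.eval_mul]

lemma poch_succ_left (c : ℂ) (k : ℕ) : poch c (k+1) = c * poch (c+1) k := by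
  simp [poch, ascPochhammer_succ_left, Polynomial.eval_comp]

lemma poch_b_ne (b : ℂ) (hb : ∀ k : ℕ, b + k ≠ 0) (k : ℕ) : poch b k ≠ 0 := by
  induction k with
  | zero => simp [poch_zero]
  | succ n ih => rw [poch_succ]; exact mul_ne_zero ih (hb n)

lemma coeff_derivativeFun' (f : PowerSeries ℂ) (n : ℕ) :
    coeff n f.derivativeFun = coeff (n + 1) f * (n + 1) :=
  coeff_derivative f n

set_option maxHeartbeats 2000000 in
lemma key (A b s : ℂ) (hb : ∀ k : ℕ, b + k ≠ 0) :
    PowerSeries.C s * (X : PowerSeries ℂ) ^ 2 * D (F1 A b s)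
        = PowerSeries.C A *
            (PowerSeries.C (A + 1) * F1 (A + 2) b s
              + PowerSeries.C (b - 3 * A - 2) * F1 (A + 1) b s
              + PowerSeries.C (3 * A - 2 * b + 1) * F1 A b s
              + PowerSeries.C (b - A) * F1 (A - 1) b s) := by
  ext k
  rw [mul_assoc]
  simp only [LinearMap.map_add, coeff_C_mul, D, coeff_X_pow_mul', F1, coeff_mk,
    coeff_derivativeFun']
  match k with
  | 0 =>
    rw [if_neg (by norm_num)]
    simp only [poch_zero, pow_zero, Nat.factorial_zero, Nat.cast_one, div_one, one_div,
      div_self (one_ne_zero (α := ℂ)), one_mul, mul_one]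
    ring
  | 1 =>
    rw [if_neg (by norm_num)]
    simp only [poch_succ, poch_zero, Nat.cast_zero, add_zero, one_mul,
      Nat.factorial_one, Nat.cast_one, div_one, pow_one]
    have hbne : b ≠ 0 := by simpa using hb 0
    field_simp
    ring
  | (m+2) =>
    rw [if_pos (by norm_num)]
    have e0 : poch (A-1) (m+2) = (A-1) * (A * poch (A+1) m) := by
      rw [poch_succ_left, sub_add_cancel, poch_succ_left]
    have e1 : poch A (m+2) = A * poch (A+1) m * (A+1+m) := by
      rw [poch_succ_left]
      have := poch_succ (A+1) m
      rw [this]; ring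
    have e4 : poch A (m+1) = A * poch (A+1) m := (poch_succ_left A m)
    have e2 : poch (A+1) (m+2) = poch (A+1) m * (A+1+m) * (A+2+m) := by
      rw [poch_succ, poch_succ]; push_cast; ring
    have e3 : (A+1) * poch (A+2) (m+2) = poch (A+1) m * (A+1+m) * (A+2+m) * (A+3+m) := by
      have h := poch_succ_left (A+1) (m+2)
      rw [show A+1+1 = A+2 by ring] at h
      have h2 : poch (A+1) (m+2+1) = poch (A+1) m * (A+1+m) * (A+2+m) * (A+3+m) := by
        rw [poch_succ, poch_succ, poch_succ]; push_cast; ring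
      rw [← h, h2]
    have hpb : poch b (m+2) = poch b (m+1) * (b + (m+1)) := by
      rw [poch_succ]; push_cast; ring
    have hfac : ((m+2).factorial : ℂ) = (m+2) * ((m+1).factorial : ℂ) := by
      rw [Nat.factorial_succ]; push_cast; ring
    have hb1 : poch b (m+1) ≠ 0 := poch_b_ne b hb (m+1)
    have hb2 : (b + ((m:ℂ)+1)) ≠ 0 := by
      have := hb (m+1); push_cast at this ⊢; exact this
    have hf1 : ((m+1).factorial : ℂ) ≠ 0 := Nat.cast_ne_zero.2 (Nat.factorial_ne_zero _)
    have hm2 : ((m:ℂ)+2) ≠ 0 := by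
      have h2 : ((m+2:ℕ):ℂ) ≠ 0 := Nat.cast_ne_zero.2 (by omega)
      push_cast at h2; exact h2
    have hmsub : (m + 2 - 2) = m := rfl
    have main : poch A (m+1) * ((((m:ℂ))+1) * (((m:ℂ))+2) * (b+(((m:ℂ))+1)))
        = A * ((A+1) * poch (A+2) (m+2) + (b-3*A-2) * poch (A+1) (m+2)
            + (3*A-2*b+1) * poch A (m+2) + (b-A) * poch (A-1) (m+2)) := by
      rw [e0, e1, e4, e2]
      linear_combination (-A) * e3
    rw [hmsub]
    calc s * (poch A (m + 1) / poch b (m + 1) * s ^ (m + 1) / ((m + 1).factorial : ℂ) * ((m:ℂ) + 1))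
        = (poch A (m+1) * ((((m:ℂ))+1) * (((m:ℂ))+2) * (b+(((m:ℂ))+1)))) *
            (s^(m+2) / (poch b (m+2) * (((m+2).factorial : ℂ)))) := by
          rw [hpb, hfac]
          field_simp
          ring
      _ = (A * ((A+1) * poch (A+2) (m+2) + (b-3*A-2) * poch (A+1) (m+2)
            + (3*A-2*b+1) * poch A (m+2) + (b-A) * poch (A-1) (m+2))) *
            (s^(m+2) / (poch b (m+2) * (((m+2).factorial : ℂ)))) := by
          rw [main]
      _ = _ := by ring

theorem stmt_14 (a b s : ℂ) (hb : ∀ k : ℕ, b + k ≠ 0) :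
    ∀ n : ℕ, 1 ≤ n →
      PowerSeries.C s * (X : PowerSeries ℂ) ^ 2 * D (F1 (a + n) b s)
        = PowerSeries.C (a + n) *
            (PowerSeries.C (a + n + 1) * F1 (a + (n + 2 : ℕ)) b s
              + PowerSeries.C (b - 3 * (a + n) - 2) * F1 (a + (n + 1 : ℕ)) b s
              + PowerSeries.C (3 * (a + n) - 2 * b + 1) * F1 (a + n) b s
              + PowerSeries.C (b - (a + n)) * F1 (a + (n - 1 : ℕ)) b s) := by
  intro n hn
  have h2 : (a + ((n + 2 : ℕ)) : ℂ) = (a + n) + 2 := by push_cast; ring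
  have h1 : (a + ((n + 1 : ℕ)) : ℂ) = (a + n) + 1 := by push_cast; ring
  have h0 : (a + ((n - 1 : ℕ)) : ℂ) = (a + n) - 1 := by
    rw [Nat.cast_sub hn]; push_cast; ring
  rw [h2, h1, h0]
  exact key (a + n) b s hb
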